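/- Let m > 0. (i) If F₁ : ℝ → ℝ is of class C⁷ with ‖F₁‖_{m,7} < ∞ and F₁(0) = F₁'(0) = 0, then, setting F_{1,ε}(u) := ε^{−2/3} F₁(ε^{1/3} u), one has ‖F_{1,ε} − (1/2)F₁''(0)(·)²‖_{m,7} → 0 as ε → 0⁺. (ii) If F₂ : ℝ → ℝ is of class C⁷ with ‖F₂‖_{m,7} < ∞ and F₂'(0) = 0, then, setting F_{2,ε}(u) := ε^{−2/3}(F₂(ε^{1/3}u) − F₂(0))·u, one has ‖F_{2,ε} − (1/2)F₂''(0)(·)³‖_{m,7} → 0 as ε → 0⁺. (iii) If F₃ : ℝ → ℝ is of class C⁷ with ‖F₃‖_{m,7} < ∞ and F₃'(0) = F₃'''(0) = 0, then, setting F_{3,ε}(u) := ε^{−4/3}(F₃(ε^{1/3}u) − F₃(0) − (1/2)F₃''(0)ε^{2/3}u²), one has ‖F_{3,ε} − (1/24)F₃⁽⁴⁾(0)(·)⁴‖_{m,7} → 0 as ε → 0⁺. -/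

import Mathlib

open Real

section Stmt13Helpers


-- iterated deriv of c * f
lemma itd_cmul {n : ℕ} {f : ℝ → ℝ} (h : ContDiff ℝ n f) (c : ℝ) (x : ℝ) :
    iteratedDeriv n (fun z => c * f z) x = c * iteratedDeriv n f x := by
  rw [← iteratedDerivWithin_univ, ← iteratedDerivWithin_univ]
  exact iteratedDerivWithin_const_mul (Set.mem_univ x) uniqueDiffOn_univ c h.contDiffWithinAt

lemma itd_sub {n : ℕ} {f g : ℝ → ℝ} (hf : ContDiff ℝ n f) (hg : ContDiff ℝ n g) (x : ℝ) :
    iteratedDeriv n (fun z => f z - g z) x = iteratedDeriv n f x - iteratedDeriv n g x := by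
  rw [← iteratedDerivWithin_univ, ← iteratedDerivWithin_univ, ← iteratedDerivWithin_univ]
  exact iteratedDerivWithin_sub (Set.mem_univ x) uniqueDiffOn_univ hf.contDiffWithinAt hg.contDiffWithinAt

lemma itd_add {n : ℕ} {f g : ℝ → ℝ} (hf : ContDiff ℝ n f) (hg : ContDiff ℝ n g) (x : ℝ) :
    iteratedDeriv n (fun z => f z + g z) x = iteratedDeriv n f x + iteratedDeriv n g x := by
  rw [← iteratedDerivWithin_univ, ← iteratedDerivWithin_univ, ← iteratedDerivWithin_univ]
  exact iteratedDerivWithin_add (Set.mem_univ x) uniqueDiffOn_univ hf.contDiffWithinAt hg.contDiffWithinAt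

-- monomial
lemma itd_monomial (n : ℕ) : ∀ k : ℕ, iteratedDeriv k (fun x : ℝ => x ^ n)
    = fun x => (n.descFactorial k : ℝ) * x ^ (n - k) := by
  intro k
  induction k with
  | zero => simp
  | succ k ih =>
    rw [iteratedDeriv_succ, ih]
    funext x
    rw [deriv_const_mul _ (differentiableAt_pow _), deriv_pow_field, Nat.descFactorial_succ]
    have h1 : n - (k + 1) = n - k - 1 := by omega
    rw [h1]
    push_cast
    ring


lemma abs_le_of_mem_uIcc {t x : ℝ} (ht : t ∈ Set.uIcc 0 x) : |t| ≤ |x| := by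
  rcases Set.mem_uIcc.1 ht with ⟨h1, h2⟩ | ⟨h1, h2⟩
  · rw [abs_of_nonneg h1]; exact h2.trans (le_abs_self x)
  · rw [abs_of_nonpos h2]; linarith [neg_abs_le x]

lemma core_bound {m L : ℝ} (hm : 0 < m) (hL : 0 ≤ L) {n : ℕ} (hn : n ≤ 7) {G : ℝ → ℝ}
    (hG : ContDiff ℝ 7 G)
    (h0 : ∀ k, k < n → iteratedDeriv k G 0 = 0)
    (hb : ∀ x : ℝ, |iteratedDeriv n G x| ≤ L * Real.exp (m * |x|)) :
    ∀ j k : ℕ, k + j = n → ∀ x : ℝ,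
      |iteratedDeriv k G x| ≤ L * |x| ^ j * Real.exp (m * |x|) := by
  intro j
  induction j with
  | zero => intro k hk x; simp only [Nat.add_zero] at hk; subst hk; simpa using hb x
  | succ j ih =>
    intro k hk x
    have hkn : k < n := by omega
    set C : ℝ := L * |x| ^ j * Real.exp (m * |x|) with hC
    have hCnn : 0 ≤ C := by positivity
    have hd : ∀ t ∈ Set.uIcc (0:ℝ) x, HasDerivWithinAt (iteratedDeriv k G)
        (iteratedDeriv (k + 1) G t) (Set.uIcc (0:ℝ) x) t := by
      intro t _
      have hdiff : Differentiable ℝ (iteratedDeriv k G) :=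
        hG.differentiable_iteratedDeriv k
          (by exact_mod_cast lt_of_lt_of_le hkn (by exact_mod_cast hn))
      have h1 : HasDerivAt (iteratedDeriv k G) (iteratedDeriv (k + 1) G t) t := by
        rw [iteratedDeriv_succ]; exact (hdiff t).hasDerivAt
      exact h1.hasDerivWithinAt
    have hbd : ∀ t ∈ Set.uIcc (0:ℝ) x, ‖iteratedDeriv (k + 1) G t‖ ≤ C := by
      intro t ht
      have h1 := ih (k + 1) (by omega) t
      have h2 : |t| ≤ |x| := abs_le_of_mem_uIcc ht
      calc ‖iteratedDeriv (k + 1) G t‖ = |iteratedDeriv (k + 1) G t| := rfl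
        _ ≤ L * |t| ^ j * Real.exp (m * |t|) := h1
        _ ≤ C := by
            rw [hC]
            have e1 : |t| ^ j ≤ |x| ^ j := pow_le_pow_left₀ (abs_nonneg t) h2 j
            have e2 : Real.exp (m * |t|) ≤ Real.exp (m * |x|) :=
              Real.exp_le_exp.2 (by nlinarith [hm.le])
            calc L * |t| ^ j * Real.exp (m * |t|)
                ≤ L * |x| ^ j * Real.exp (m * |t|) :=
                  mul_le_mul_of_nonneg_right (mul_le_mul_of_nonneg_left e1 hL)
                    (Real.exp_nonneg _)
              _ ≤ L * |x| ^ j * Real.exp (m * |x|) :=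
                  mul_le_mul_of_nonneg_left e2 (by positivity)
    have hmvt := Convex.norm_image_sub_le_of_norm_hasDerivWithin_le hd hbd (convex_uIcc _ _)
      (Set.left_mem_uIcc) (Set.right_mem_uIcc)
    rw [h0 k hkn, sub_zero] at hmvt
    have : ‖iteratedDeriv k G x‖ ≤ C * |x| := by simpa using hmvt
    calc |iteratedDeriv k G x| ≤ C * |x| := this
      _ = L * |x| ^ (j + 1) * Real.exp (m * |x|) := by rw [hC, pow_succ]; ring


lemma pow_le_factorial_mul_exp (t : ℝ) (ht : 0 ≤ t) (j : ℕ) :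
    t ^ j ≤ (j.factorial : ℝ) * Real.exp t := by
  have h1 : t ^ j / (j.factorial : ℝ) ≤ Real.exp t := by
    calc t ^ j / (j.factorial : ℝ) ≤ ∑ i ∈ Finset.range (j + 1), t ^ i / (i.factorial : ℝ) := by
          refine Finset.single_le_sum (f := fun i => t ^ i / (i.factorial : ℝ)) ?_ ?_
          · intro i _; positivity
          · exact Finset.self_mem_range_succ j
      _ ≤ Real.exp t := Real.sum_le_exp_of_nonneg ht _
  have hj : (0:ℝ) < (j.factorial : ℝ) := by exact_mod_cast j.factorial_pos
  calc t ^ j = (j.factorial : ℝ) * (t ^ j / (j.factorial : ℝ)) := by field_simp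
    _ ≤ (j.factorial : ℝ) * Real.exp t := by
        exact mul_le_mul_of_nonneg_left h1 hj.le

/-- `|u|^j e^{-(m/2)|u|} ≤ 120 (1+2/m)^5` for `j ≤ 5`. -/
lemma mexp_bound {m : ℝ} (hm : 0 < m) {j : ℕ} (hj : j ≤ 5) (u : ℝ) :
    |u| ^ j * Real.exp (-(m / 2 * |u|)) ≤ 120 * (1 + 2 / m) ^ 5 := by
  set t : ℝ := m / 2 * |u| with htdef
  have ht : 0 ≤ t := by positivity
  have hu : |u| = (2 / m) * t := by rw [htdef]; field_simp
  have h1 : t ^ j * Real.exp (-t) ≤ (j.factorial : ℝ) := by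
    have := pow_le_factorial_mul_exp t ht j
    have he : Real.exp (-t) = (Real.exp t)⁻¹ := Real.exp_neg t
    rw [he]
    rw [mul_inv_le_iff₀ (Real.exp_pos t)]
    linarith
  have h2 : |u| ^ j * Real.exp (-t) = (2 / m) ^ j * (t ^ j * Real.exp (-t)) := by
    rw [hu, mul_pow]; ring
  have h3 : (2 / m) ^ j ≤ (1 + 2 / m) ^ 5 := by
    calc (2 / m) ^ j ≤ (1 + 2 / m) ^ j := by
          apply pow_le_pow_left₀ (by positivity) (by linarith)
      _ ≤ (1 + 2 / m) ^ 5 := by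
          have : (0:ℝ) ≤ 2 / m := by positivity
          exact pow_le_pow_right₀ (by linarith) hj
  have h4 : (j.factorial : ℝ) ≤ 120 := by
    interval_cases j <;> norm_num [Nat.factorial]
  calc |u| ^ j * Real.exp (-t) = (2 / m) ^ j * (t ^ j * Real.exp (-t)) := h2
    _ ≤ (1 + 2 / m) ^ 5 * (j.factorial : ℝ) := by
        apply mul_le_mul h3 h1 (by positivity) (by positivity)
    _ ≤ (1 + 2 / m) ^ 5 * 120 := by
        apply mul_le_mul_of_nonneg_left h4 (by positivity)
    _ = 120 * (1 + 2 / m) ^ 5 := by ring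


lemma apow_gen {ε : ℝ} (hε : 0 < ε) (j : ℕ) (r s : ℝ) (h : (j : ℝ) / 3 + r = s) :
    (ε ^ ((1:ℝ) / 3)) ^ j * ε ^ r = ε ^ s := by
  have h1 : (ε ^ ((1:ℝ) / 3)) ^ j = ε ^ ((j : ℝ) / 3) := by
    rw [← Real.rpow_natCast (ε ^ ((1:ℝ) / 3)) j, ← Real.rpow_mul hε.le]
    ring_nf
  rw [h1, ← Real.rpow_add hε, h]

/-- Master weighted-bound lemma. -/
lemma master {m L c : ℝ} (hm : 0 < m) (hL : 0 ≤ L) (hc : 0 ≤ c) {a : ℝ}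
    (ha : a ≤ 1 / 2) {i : ℕ} (hi : i ≤ 5) (u g : ℝ)
    (hg : |g| ≤ c * L * (|u| ^ i * Real.exp (m * (a * |u|)))) :
    Real.exp (-m * |u|) * |g| ≤ c * (L * (120 * (1 + 2 / m) ^ 5)) := by
  have h2 : Real.exp (m * (a * |u|)) * Real.exp (-m * |u|) ≤ Real.exp (-(m / 2 * |u|)) := by
    rw [← Real.exp_add]
    apply Real.exp_le_exp.2
    nlinarith [mul_nonneg hm.le (mul_nonneg (sub_nonneg.2 ha) (abs_nonneg u))]
  have h3 : |u| ^ i * Real.exp (-(m / 2 * |u|)) ≤ 120 * (1 + 2 / m) ^ 5 :=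
    mexp_bound hm hi u
  calc Real.exp (-m * |u|) * |g|
      ≤ Real.exp (-m * |u|) * (c * L * (|u| ^ i * Real.exp (m * (a * |u|)))) :=
        mul_le_mul_of_nonneg_left hg (Real.exp_nonneg _)
    _ = c * L * (|u| ^ i * (Real.exp (m * (a * |u|)) * Real.exp (-m * |u|))) := by ring
    _ ≤ c * L * (|u| ^ i * Real.exp (-(m / 2 * |u|))) := by
        apply mul_le_mul_of_nonneg_left _ (by positivity)
        exact mul_le_mul_of_nonneg_left h2 (by positivity)
    _ ≤ c * L * (120 * (1 + 2 / m) ^ 5) := by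
        apply mul_le_mul_of_nonneg_left h3 (by positivity)
    _ = c * (L * (120 * (1 + 2 / m) ^ 5)) := by ring

/-- Leibniz: `D^ℓ (v ↦ v·P v) = u·P^{(ℓ)} + ℓ·P^{(ℓ-1)}`. -/
lemma itd_id_mul {P : ℝ → ℝ} (hP : ContDiff ℝ 7 P) :
    ∀ ℓ : ℕ, ℓ ≤ 7 → ∀ u : ℝ, iteratedDeriv ℓ (fun v => v * P v) u
      = u * iteratedDeriv ℓ P u + (ℓ : ℝ) * iteratedDeriv (ℓ - 1) P u := by
  intro ℓ
  induction ℓ with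
  | zero => intro _ u; simp
  | succ ℓ ih =>
    intro hℓ u
    have hfun : iteratedDeriv ℓ (fun v => v * P v)
        = fun u => u * iteratedDeriv ℓ P u + (ℓ : ℝ) * iteratedDeriv (ℓ - 1) P u :=
      funext (ih (by omega))
    rw [iteratedDeriv_succ, hfun]
    have hQ1 : HasDerivAt (iteratedDeriv ℓ P) (iteratedDeriv (ℓ + 1) P u) u := by
      rw [iteratedDeriv_succ]
      exact ((hP.differentiable_iteratedDeriv ℓ
        (by exact_mod_cast (show ℓ < 7 by omega))) u).hasDerivAt
    have hQ2 : HasDerivAt (iteratedDeriv (ℓ - 1) P) (iteratedDeriv (ℓ - 1 + 1) P u) u := by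
      rw [iteratedDeriv_succ]
      exact ((hP.differentiable_iteratedDeriv (ℓ - 1)
        (by exact_mod_cast (show ℓ - 1 < 7 by omega))) u).hasDerivAt
    have d1 : HasDerivAt (fun u : ℝ => u * iteratedDeriv ℓ P u)
        (iteratedDeriv ℓ P u + u * iteratedDeriv (ℓ + 1) P u) u := by
      have := ((hasDerivAt_id' u).mul hQ1 : HasDerivAt (fun y : ℝ => y * iteratedDeriv ℓ P y) _ u)
      exact this.congr_deriv (by ring)
    have d2 : HasDerivAt (fun u : ℝ => (ℓ : ℝ) * iteratedDeriv (ℓ - 1) P u)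
        ((ℓ : ℝ) * iteratedDeriv (ℓ - 1 + 1) P u) u := hQ2.const_mul _
    rw [(show HasDerivAt (fun u : ℝ => u * iteratedDeriv ℓ P u + (ℓ : ℝ) * iteratedDeriv (ℓ - 1) P u) _ u from d1.add d2).deriv]
    have hcoef : (ℓ : ℝ) * iteratedDeriv (ℓ - 1 + 1) P u = (ℓ : ℝ) * iteratedDeriv ℓ P u := by
      rcases ℓ with _ | k
      · simp
      · norm_num
    rw [hcoef]
    simp only [Nat.add_sub_cancel]
    push_cast
    ring


lemma scaled_bound {m L : ℝ} (hm : 0 < m) (hL : 0 ≤ L) {G : ℝ → ℝ} (hG : ContDiff ℝ 7 G)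
    {n : ℕ} (hn7 : n ≤ 5)
    (h0 : ∀ k, k < n → iteratedDeriv k G 0 = 0)
    (hb : ∀ k, n ≤ k → k ≤ 7 → ∀ x : ℝ, |iteratedDeriv k G x| ≤ L * Real.exp (m * |x|))
    {ε : ℝ} (hε : 0 < ε) (ha : ε ^ ((1:ℝ)/3) ≤ 1/2) {r : ℝ} (hr : (n : ℝ)/3 + r = 1/3)
    {ℓ : ℕ} (hℓ : ℓ ≤ 7) {e : ℕ} (he : n - ℓ + e ≤ 5) (u : ℝ) :
    Real.exp (-m * |u|) *
        |u ^ e * (ε ^ r * ((ε ^ ((1:ℝ)/3)) ^ ℓ * iteratedDeriv ℓ G (ε ^ ((1:ℝ)/3) * u)))|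
      ≤ ε ^ ((1:ℝ)/3) * (L * (120 * (1 + 2 / m) ^ 5)) := by
  set a := ε ^ ((1:ℝ)/3) with ha_def
  have ha0 : 0 < a := Real.rpow_pos_of_pos hε _
  have ha1 : a ≤ 1 := ha.trans (by norm_num)
  have hεr : 0 < ε ^ r := Real.rpow_pos_of_pos hε _
  have habs : |a * u| = a * |u| := by rw [abs_mul, abs_of_pos ha0]
  have habsg : |u ^ e * (ε ^ r * (a ^ ℓ * iteratedDeriv ℓ G (a * u)))|
      = |u| ^ e * (ε ^ r * (a ^ ℓ * |iteratedDeriv ℓ G (a * u)|)) := by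
    rw [abs_mul, abs_mul, abs_mul, abs_pow, abs_of_pos hεr, abs_of_pos (pow_pos ha0 ℓ)]
  by_cases hc : ℓ ≤ n
  · have hcore := core_bound hm hL (by omega) hG h0 (hb n le_rfl (by omega)) (n - ℓ) ℓ
      (by omega) (a * u)
    rw [habs] at hcore
    have hpow : ε ^ r * (a ^ ℓ * a ^ (n - ℓ)) = a := by
      rw [← pow_add, show ℓ + (n - ℓ) = n by omega, mul_comm]
      exact apow_gen hε n r ((1:ℝ)/3) hr
    refine master hm hL ha0.le ha (i := n - ℓ + e) he _ _ ?_
    rw [habsg]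
    calc |u| ^ e * (ε ^ r * (a ^ ℓ * |iteratedDeriv ℓ G (a * u)|))
        ≤ |u| ^ e * (ε ^ r * (a ^ ℓ * (L * (a * |u|) ^ (n - ℓ) * Real.exp (m * (a * |u|))))) := by
          apply mul_le_mul_of_nonneg_left _ (by positivity)
          apply mul_le_mul_of_nonneg_left _ hεr.le
          exact mul_le_mul_of_nonneg_left hcore (by positivity)
      _ = a * L * (|u| ^ (n - ℓ + e) * Real.exp (m * (a * |u|))) := by
          rw [mul_pow, pow_add]
          linear_combination (|u| ^ e * (L * (|u| ^ (n - ℓ) * Real.exp (m * (a * |u|))))) * hpow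
  · have hbl := hb ℓ (by omega) hℓ (a * u)
    rw [habs] at hbl
    have hnℓ : n - ℓ = 0 := by omega
    have hpow : ε ^ r * a ^ ℓ = a ^ (ℓ - n) * a := by
      have h1 : a ^ ℓ = a ^ (ℓ - n) * a ^ n := by rw [← pow_add]; congr 1; omega
      have h2 : a ^ n * ε ^ r = a := apow_gen hε n r ((1:ℝ)/3) hr
      rw [h1]; linear_combination a ^ (ℓ - n) * h2
    have hcle : ε ^ r * a ^ ℓ ≤ a := by
      rw [hpow]
      have : a ^ (ℓ - n) ≤ 1 := pow_le_one₀ ha0.le ha1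
      nlinarith
    have hmaster : Real.exp (-m * |u|) *
        |u ^ e * (ε ^ r * (a ^ ℓ * iteratedDeriv ℓ G (a * u)))|
        ≤ (ε ^ r * a ^ ℓ) * (L * (120 * (1 + 2 / m) ^ 5)) := by
      refine master hm hL (by positivity) ha (i := n - ℓ + e) he _ _ ?_
      rw [habsg, hnℓ]
      calc |u| ^ e * (ε ^ r * (a ^ ℓ * |iteratedDeriv ℓ G (a * u)|))
          ≤ |u| ^ e * (ε ^ r * (a ^ ℓ * (L * Real.exp (m * (a * |u|))))) := by
            apply mul_le_mul_of_nonneg_left _ (by positivity)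
            apply mul_le_mul_of_nonneg_left _ hεr.le
            exact mul_le_mul_of_nonneg_left hbl (by positivity)
        _ = ε ^ r * a ^ ℓ * L * (|u| ^ (0 + e) * Real.exp (m * (a * |u|))) := by
            rw [zero_add]; ring
    refine hmaster.trans ?_
    apply mul_le_mul_of_nonneg_right hcle (by positivity)


lemma contDiff_pow' (k j : ℕ) : ContDiff ℝ k (fun z : ℝ => z ^ j) := by
  exact contDiff_id.pow j

lemma itd_mono (C : ℝ) (j k : ℕ) (x : ℝ) :
    iteratedDeriv k (fun z : ℝ => C * z ^ j) x
      = C * ((j.descFactorial k : ℝ) * x ^ (j - k)) := by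
  rw [itd_cmul (contDiff_pow' k j) C x, itd_monomial j k]

lemma itd_G {F : ℝ → ℝ} (hF : ContDiff ℝ 7 F) (A B2 B4 : ℝ) {k : ℕ} (hk : k ≤ 7) (x : ℝ) :
    iteratedDeriv k (fun z => F z - (A * z ^ 0 + B2 * z ^ 2 + B4 * z ^ 4)) x
      = iteratedDeriv k F x - (A * ((Nat.descFactorial 0 k : ℝ) * x ^ (0 - k))
          + B2 * ((Nat.descFactorial 2 k : ℝ) * x ^ (2 - k))
          + B4 * ((Nat.descFactorial 4 k : ℝ) * x ^ (4 - k))) := by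
  have c0 : ContDiff ℝ k (fun z : ℝ => A * z ^ 0) := contDiff_const.mul (contDiff_pow' k 0)
  have c2 : ContDiff ℝ k (fun z : ℝ => B2 * z ^ 2) := contDiff_const.mul (contDiff_pow' k 2)
  have c4 : ContDiff ℝ k (fun z : ℝ => B4 * z ^ 4) := contDiff_const.mul (contDiff_pow' k 4)
  rw [itd_sub (hF.of_le (by exact_mod_cast hk)) ((c0.add c2).add c4) x,
    itd_add (c0.add c2) c4 x, itd_add c0 c2 x, itd_mono, itd_mono, itd_mono]


lemma rpow_third {b : ℝ} (hb : 0 ≤ b) : (b ^ (3:ℕ)) ^ ((1:ℝ)/3) = b := by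
  rw [← Real.rpow_natCast b 3, ← Real.rpow_mul hb]
  norm_num

lemma eps_choice {δ M : ℝ} (hδ : 0 < δ) (hM : 0 < M) :
    ∃ ε₀ : ℝ, 0 < ε₀ ∧ ∀ ε : ℝ, 0 < ε → ε ≤ ε₀ →
      ε ^ ((1:ℝ)/3) ≤ 1/2 ∧ ε ^ ((1:ℝ)/3) * M ≤ δ := by
  refine ⟨min (1/8) ((δ/M) ^ (3:ℕ)), lt_min (by norm_num) (by positivity), ?_⟩
  intro ε hε hεle
  have hdM : 0 ≤ δ / M := by positivity
  constructor
  · have h1 : ε ^ ((1:ℝ)/3) ≤ ((1:ℝ)/8) ^ ((1:ℝ)/3) :=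
      Real.rpow_le_rpow hε.le (hεle.trans (min_le_left _ _)) (by norm_num)
    have h2 : ((1:ℝ)/8) = ((1:ℝ)/2) ^ (3:ℕ) := by norm_num
    rw [h2, rpow_third (by norm_num)] at h1
    exact h1
  · have h1 : ε ^ ((1:ℝ)/3) ≤ ((δ/M) ^ (3:ℕ)) ^ ((1:ℝ)/3) :=
      Real.rpow_le_rpow hε.le (hεle.trans (min_le_right _ _)) (by norm_num)
    rw [rpow_third hdM] at h1
    calc ε ^ ((1:ℝ)/3) * M ≤ (δ/M) * M := mul_le_mul_of_nonneg_right h1 hM.le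
      _ = δ := div_mul_cancel₀ δ hM.ne'

lemma expand_bound {m L : ℝ} {F : ℝ → ℝ}
    (hL : ∀ ℓ : ℕ, ℓ ≤ 7 → ∀ x : ℝ, Real.exp (-m * |x|) * |iteratedDeriv ℓ F x| ≤ L) :
    ∀ ℓ : ℕ, ℓ ≤ 7 → ∀ x : ℝ, |iteratedDeriv ℓ F x| ≤ L * Real.exp (m * |x|) := by
  intro ℓ hℓ x
  have h := hL ℓ hℓ x
  have he : Real.exp (m * |x|) * Real.exp (-m * |x|) = 1 := by
    rw [← Real.exp_add]; norm_num
  calc |iteratedDeriv ℓ F x|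
      = Real.exp (m * |x|) * (Real.exp (-m * |x|) * |iteratedDeriv ℓ F x|) := by
        rw [← mul_assoc, he, one_mul]
    _ ≤ Real.exp (m * |x|) * L := mul_le_mul_of_nonneg_left h (Real.exp_nonneg _)
    _ = L * Real.exp (m * |x|) := mul_comm _ _

lemma L_nonneg {m L : ℝ} {F : ℝ → ℝ}
    (hL : ∀ ℓ : ℕ, ℓ ≤ 7 → ∀ x : ℝ, Real.exp (-m * |x|) * |iteratedDeriv ℓ F x| ≤ L) :
    0 ≤ L :=
  le_trans (by positivity) (hL 0 (by norm_num) 0)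


lemma part_one {m : ℝ} (hm : 0 < m) (F : ℝ → ℝ) (hF : ContDiff ℝ 7 F)
    (hLex : ∃ L : ℝ, ∀ ℓ : ℕ, ℓ ≤ 7 → ∀ x : ℝ,
      Real.exp (-m * |x|) * |iteratedDeriv ℓ F x| ≤ L)
    (hF0 : F 0 = 0) (hF1 : deriv F 0 = 0) :
    ∀ δ : ℝ, 0 < δ → ∃ ε₀ : ℝ, 0 < ε₀ ∧
      ∀ ε : ℝ, 0 < ε → ε ≤ ε₀ → ∀ ℓ : ℕ, ℓ ≤ 7 → ∀ u : ℝ,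
        Real.exp (-m * |u|) *
          |iteratedDeriv ℓ (fun v : ℝ =>
              ε ^ (-(2 : ℝ) / 3) * F (ε ^ ((1 : ℝ) / 3) * v)
                - 1 / 2 * iteratedDeriv 2 F 0 * v ^ 2) u| ≤ δ := by
  obtain ⟨L, hL⟩ := hLex
  have hL0 : 0 ≤ L := L_nonneg hL
  have hFb := expand_bound hL
  set B : ℝ := 120 * (1 + 2 / m) ^ 5 with hB
  have hBpos : 0 < B := by positivity
  set M : ℝ := 8 * (L + 1) * (B + 1) with hM
  have hMpos : 0 < M := by positivity
  intro δ hδ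
  obtain ⟨ε₀, hε₀, hεp⟩ := eps_choice hδ hMpos
  refine ⟨ε₀, hε₀, ?_⟩
  intro ε hε hεle ℓ hℓ u
  obtain ⟨ha12, haM⟩ := hεp ε hε hεle
  set G : ℝ → ℝ := fun z => F z -
    ((0:ℝ) * z ^ 0 + 1 / 2 * iteratedDeriv 2 F 0 * z ^ 2 + (0:ℝ) * z ^ 4) with hGdef
  have hG : ContDiff ℝ 7 G := by
    apply hF.sub
    exact ((contDiff_const.mul (contDiff_id.pow 0)).add
      (contDiff_const.mul (contDiff_id.pow 2))).add (contDiff_const.mul (contDiff_id.pow 4))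
  have hGd : ∀ k : ℕ, k ≤ 7 → ∀ x : ℝ, iteratedDeriv k G x
      = iteratedDeriv k F x - ((0:ℝ) * ((Nat.descFactorial 0 k : ℝ) * x ^ (0 - k))
          + (1 / 2 * iteratedDeriv 2 F 0) * ((Nat.descFactorial 2 k : ℝ) * x ^ (2 - k))
          + (0:ℝ) * ((Nat.descFactorial 4 k : ℝ) * x ^ (4 - k))) := by
    intro k hk x
    have := itd_G hF 0 (1 / 2 * iteratedDeriv 2 F 0) 0 hk x
    rw [hGdef]
    convert this using 3 <;> ring
  have h0 : ∀ k, k < 3 → iteratedDeriv k G 0 = 0 := by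
    intro k hk
    interval_cases k
    · rw [hGd 0 (by norm_num)]
      simp [hF0, Nat.descFactorial]
    · rw [hGd 1 (by norm_num)]
      simp [iteratedDeriv_one, hF1, Nat.descFactorial]
    · rw [hGd 2 (by norm_num)]
      norm_num [Nat.descFactorial]
      ring
  have hb : ∀ k, 3 ≤ k → k ≤ 7 → ∀ x : ℝ, |iteratedDeriv k G x| ≤ L * Real.exp (m * |x|) := by
    intro k hk3 hk7 x
    have d2 : (Nat.descFactorial 2 k : ℝ) = 0 := by
      exact_mod_cast Nat.descFactorial_eq_zero_iff_lt.2 (by omega)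
    calc |iteratedDeriv k G x| = |iteratedDeriv k F x| := by
          rw [hGd k hk7, d2]; norm_num
      _ ≤ L * Real.exp (m * |x|) := hFb k hk7 x
  have hfeq : (fun v : ℝ => ε ^ (-(2 : ℝ) / 3) * F (ε ^ ((1 : ℝ) / 3) * v)
        - 1 / 2 * iteratedDeriv 2 F 0 * v ^ 2)
      = fun v : ℝ => ε ^ (-(2 : ℝ) / 3) * G (ε ^ ((1 : ℝ) / 3) * v) := by
    funext v
    have key : (ε ^ ((1:ℝ)/3)) ^ (2:ℕ) * ε ^ (-(2:ℝ)/3) = 1 := by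
      have := apow_gen hε 2 (-(2:ℝ)/3) 0 (by norm_num)
      rwa [Real.rpow_zero] at this
    rw [hGdef]
    linear_combination (1 / 2 * iteratedDeriv 2 F 0 * v ^ 2) * key
  have hitd : iteratedDeriv ℓ (fun v : ℝ => ε ^ (-(2 : ℝ) / 3) * G (ε ^ ((1 : ℝ) / 3) * v)) u
      = ε ^ (-(2 : ℝ) / 3) * ((ε ^ ((1:ℝ)/3)) ^ ℓ
          * iteratedDeriv ℓ G (ε ^ ((1 : ℝ) / 3) * u)) := by
    have hGa : ContDiff ℝ ℓ (fun v : ℝ => G (ε ^ ((1 : ℝ) / 3) * v)) :=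
      (hG.of_le (by exact_mod_cast hℓ)).comp (contDiff_const.mul contDiff_id)
    rw [itd_cmul hGa (ε ^ (-(2 : ℝ) / 3)) u,
      iteratedDeriv_comp_const_mul (hG.of_le (by exact_mod_cast hℓ)) (ε ^ ((1 : ℝ) / 3))]
  rw [hfeq, hitd]
  have hsb := scaled_bound hm hL0 hG (n := 3) (by norm_num) h0 hb hε ha12
    (r := -(2:ℝ)/3) (by norm_num) hℓ (e := 0) (by omega) u
  simp only [pow_zero, one_mul] at hsb
  calc Real.exp (-m * |u|) * |ε ^ (-(2 : ℝ) / 3) * ((ε ^ ((1:ℝ)/3)) ^ ℓ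
          * iteratedDeriv ℓ G (ε ^ ((1 : ℝ) / 3) * u))|
      ≤ ε ^ ((1:ℝ)/3) * (L * B) := hsb
    _ ≤ ε ^ ((1:ℝ)/3) * M := by
        apply mul_le_mul_of_nonneg_left _ (Real.rpow_pos_of_pos hε _).le
        rw [hM]; nlinarith [mul_nonneg hL0 hBpos.le]
    _ ≤ δ := haM


lemma part_two {m : ℝ} (hm : 0 < m) (F : ℝ → ℝ) (hF : ContDiff ℝ 7 F)
    (hLex : ∃ L : ℝ, ∀ ℓ : ℕ, ℓ ≤ 7 → ∀ x : ℝ,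
      Real.exp (-m * |x|) * |iteratedDeriv ℓ F x| ≤ L)
    (hF1 : deriv F 0 = 0) :
    ∀ δ : ℝ, 0 < δ → ∃ ε₀ : ℝ, 0 < ε₀ ∧
      ∀ ε : ℝ, 0 < ε → ε ≤ ε₀ → ∀ ℓ : ℕ, ℓ ≤ 7 → ∀ u : ℝ,
        Real.exp (-m * |u|) *
          |iteratedDeriv ℓ (fun v : ℝ =>
              ε ^ (-(2 : ℝ) / 3) * (F (ε ^ ((1 : ℝ) / 3) * v) - F 0) * v
                - 1 / 2 * iteratedDeriv 2 F 0 * v ^ 3) u| ≤ δ := by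
  obtain ⟨L, hL⟩ := hLex
  have hL0 : 0 ≤ L := L_nonneg hL
  have hFb := expand_bound hL
  set B : ℝ := 120 * (1 + 2 / m) ^ 5 with hB
  have hBpos : 0 < B := by positivity
  set M : ℝ := 8 * (L + 1) * (B + 1) with hM
  have hMpos : 0 < M := by positivity
  intro δ hδ
  obtain ⟨ε₀, hε₀, hεp⟩ := eps_choice hδ hMpos
  refine ⟨ε₀, hε₀, ?_⟩
  intro ε hε hεle ℓ hℓ u
  obtain ⟨ha12, haM⟩ := hεp ε hε hεle
  set G : ℝ → ℝ := fun z => F z -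
    (F 0 * z ^ 0 + 1 / 2 * iteratedDeriv 2 F 0 * z ^ 2 + (0:ℝ) * z ^ 4) with hGdef
  have hG : ContDiff ℝ 7 G := by
    apply hF.sub
    exact ((contDiff_const.mul (contDiff_id.pow 0)).add
      (contDiff_const.mul (contDiff_id.pow 2))).add (contDiff_const.mul (contDiff_id.pow 4))
  have hGd : ∀ k : ℕ, k ≤ 7 → ∀ x : ℝ, iteratedDeriv k G x
      = iteratedDeriv k F x - (F 0 * ((Nat.descFactorial 0 k : ℝ) * x ^ (0 - k))
          + (1 / 2 * iteratedDeriv 2 F 0) * ((Nat.descFactorial 2 k : ℝ) * x ^ (2 - k))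
          + (0:ℝ) * ((Nat.descFactorial 4 k : ℝ) * x ^ (4 - k))) := by
    intro k hk x
    have := itd_G hF (F 0) (1 / 2 * iteratedDeriv 2 F 0) 0 hk x
    rw [hGdef]
    convert this using 3 <;> ring
  have h0 : ∀ k, k < 3 → iteratedDeriv k G 0 = 0 := by
    intro k hk
    interval_cases k
    · rw [hGd 0 (by norm_num)]
      simp [Nat.descFactorial]
    · rw [hGd 1 (by norm_num)]
      simp [iteratedDeriv_one, hF1, Nat.descFactorial]
    · rw [hGd 2 (by norm_num)]
      norm_num [Nat.descFactorial]
      ring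
  have hb : ∀ k, 3 ≤ k → k ≤ 7 → ∀ x : ℝ, |iteratedDeriv k G x| ≤ L * Real.exp (m * |x|) := by
    intro k hk3 hk7 x
    have d0 : (Nat.descFactorial 0 k : ℝ) = 0 := by
      exact_mod_cast Nat.descFactorial_eq_zero_iff_lt.2 (by omega)
    have d2 : (Nat.descFactorial 2 k : ℝ) = 0 := by
      exact_mod_cast Nat.descFactorial_eq_zero_iff_lt.2 (by omega)
    calc |iteratedDeriv k G x| = |iteratedDeriv k F x| := by
          rw [hGd k hk7, d0, d2]; norm_num
      _ ≤ L * Real.exp (m * |x|) := hFb k hk7 x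
  set P : ℝ → ℝ := fun v => ε ^ (-(2 : ℝ) / 3) * G (ε ^ ((1 : ℝ) / 3) * v) with hPdef
  have hP : ContDiff ℝ 7 P :=
    contDiff_const.mul (hG.comp (contDiff_const.mul contDiff_id))
  have hfeq : (fun v : ℝ => ε ^ (-(2 : ℝ) / 3) * (F (ε ^ ((1 : ℝ) / 3) * v) - F 0) * v
        - 1 / 2 * iteratedDeriv 2 F 0 * v ^ 3)
      = fun v : ℝ => v * P v := by
    funext v
    have key : (ε ^ ((1:ℝ)/3)) ^ (2:ℕ) * ε ^ (-(2:ℝ)/3) = 1 := by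
      have := apow_gen hε 2 (-(2:ℝ)/3) 0 (by norm_num)
      rwa [Real.rpow_zero] at this
    rw [hPdef, hGdef]
    linear_combination (1 / 2 * iteratedDeriv 2 F 0 * v ^ 3) * key
  have hitd : ∀ k : ℕ, k ≤ 7 → ∀ w : ℝ, iteratedDeriv k P w
      = ε ^ (-(2 : ℝ) / 3) * ((ε ^ ((1:ℝ)/3)) ^ k
          * iteratedDeriv k G (ε ^ ((1 : ℝ) / 3) * w)) := by
    intro k hk w
    have hGa : ContDiff ℝ k (fun v : ℝ => G (ε ^ ((1 : ℝ) / 3) * v)) :=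
      (hG.of_le (by exact_mod_cast hk)).comp (contDiff_const.mul contDiff_id)
    rw [hPdef]
    rw [itd_cmul hGa (ε ^ (-(2 : ℝ) / 3)) w,
      iteratedDeriv_comp_const_mul (hG.of_le (by exact_mod_cast hk)) (ε ^ ((1 : ℝ) / 3))]
  rw [hfeq, itd_id_mul hP ℓ hℓ u]
  have t1 : Real.exp (-m * |u|) * |u * iteratedDeriv ℓ P u|
      ≤ ε ^ ((1:ℝ)/3) * (L * B) := by
    have hsb := scaled_bound hm hL0 hG (n := 3) (by norm_num) h0 hb hε ha12
      (r := -(2:ℝ)/3) (by norm_num) hℓ (e := 1) (by omega) u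
    rw [hitd ℓ hℓ u]
    simpa using hsb
  have t2 : Real.exp (-m * |u|) * |(ℓ : ℝ) * iteratedDeriv (ℓ - 1) P u|
      ≤ 7 * (ε ^ ((1:ℝ)/3) * (L * B)) := by
    have hsb := scaled_bound hm hL0 hG (n := 3) (by norm_num) h0 hb hε ha12
      (r := -(2:ℝ)/3) (by norm_num) (show ℓ - 1 ≤ 7 by omega) (e := 0) (by omega) u
    simp only [pow_zero, one_mul] at hsb
    rw [hitd (ℓ - 1) (by omega) u]
    rw [abs_mul, Nat.abs_cast]
    have hℓ7 : (ℓ : ℝ) ≤ 7 := by exact_mod_cast hℓ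
    set X : ℝ := Real.exp (-m * |u|) *
        |ε ^ (-(2 : ℝ) / 3) * ((ε ^ ((1:ℝ)/3)) ^ (ℓ - 1)
          * iteratedDeriv (ℓ - 1) G (ε ^ ((1 : ℝ) / 3) * u))| with hX
    have hXnn : 0 ≤ X := by rw [hX]; positivity
    calc Real.exp (-m * |u|) * ((ℓ : ℝ) *
          |ε ^ (-(2 : ℝ) / 3) * ((ε ^ ((1:ℝ)/3)) ^ (ℓ - 1)
            * iteratedDeriv (ℓ - 1) G (ε ^ ((1 : ℝ) / 3) * u))|)
        = (ℓ : ℝ) * X := by rw [hX]; ring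
      _ ≤ 7 * (ε ^ ((1:ℝ)/3) * (L * B)) :=
          mul_le_mul hℓ7 hsb hXnn (by norm_num)
  calc Real.exp (-m * |u|) * |u * iteratedDeriv ℓ P u
        + (ℓ : ℝ) * iteratedDeriv (ℓ - 1) P u|
      ≤ Real.exp (-m * |u|) * (|u * iteratedDeriv ℓ P u|
          + |(ℓ : ℝ) * iteratedDeriv (ℓ - 1) P u|) :=
        mul_le_mul_of_nonneg_left (abs_add_le _ _) (Real.exp_nonneg _)
    _ = Real.exp (-m * |u|) * |u * iteratedDeriv ℓ P u|
        + Real.exp (-m * |u|) * |(ℓ : ℝ) * iteratedDeriv (ℓ - 1) P u| := by ring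
    _ ≤ ε ^ ((1:ℝ)/3) * (L * B) + 7 * (ε ^ ((1:ℝ)/3) * (L * B)) := add_le_add t1 t2
    _ = ε ^ ((1:ℝ)/3) * (8 * (L * B)) := by ring
    _ ≤ ε ^ ((1:ℝ)/3) * M := by
        apply mul_le_mul_of_nonneg_left _ (Real.rpow_pos_of_pos hε _).le
        rw [hM]; nlinarith [mul_nonneg hL0 hBpos.le]
    _ ≤ δ := haM


lemma part_three {m : ℝ} (hm : 0 < m) (F : ℝ → ℝ) (hF : ContDiff ℝ 7 F)
    (hLex : ∃ L : ℝ, ∀ ℓ : ℕ, ℓ ≤ 7 → ∀ x : ℝ,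
      Real.exp (-m * |x|) * |iteratedDeriv ℓ F x| ≤ L)
    (hF1 : deriv F 0 = 0) (hF3 : iteratedDeriv 3 F 0 = 0) :
    ∀ δ : ℝ, 0 < δ → ∃ ε₀ : ℝ, 0 < ε₀ ∧
      ∀ ε : ℝ, 0 < ε → ε ≤ ε₀ → ∀ ℓ : ℕ, ℓ ≤ 7 → ∀ u : ℝ,
        Real.exp (-m * |u|) *
          |iteratedDeriv ℓ (fun v : ℝ =>
              ε ^ (-(4 : ℝ) / 3) * (F (ε ^ ((1 : ℝ) / 3) * v) - F 0
                  - 1 / 2 * iteratedDeriv 2 F 0 * ε ^ ((2 : ℝ) / 3) * v ^ 2)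
                - 1 / 24 * iteratedDeriv 4 F 0 * v ^ 4) u| ≤ δ := by
  obtain ⟨L, hL⟩ := hLex
  have hL0 : 0 ≤ L := L_nonneg hL
  have hFb := expand_bound hL
  set B : ℝ := 120 * (1 + 2 / m) ^ 5 with hB
  have hBpos : 0 < B := by positivity
  set M : ℝ := 8 * (L + 1) * (B + 1) with hM
  have hMpos : 0 < M := by positivity
  intro δ hδ
  obtain ⟨ε₀, hε₀, hεp⟩ := eps_choice hδ hMpos
  refine ⟨ε₀, hε₀, ?_⟩
  intro ε hε hεle ℓ hℓ u
  obtain ⟨ha12, haM⟩ := hεp ε hε hεle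
  set G : ℝ → ℝ := fun z => F z -
    (F 0 * z ^ 0 + 1 / 2 * iteratedDeriv 2 F 0 * z ^ 2
      + 1 / 24 * iteratedDeriv 4 F 0 * z ^ 4) with hGdef
  have hG : ContDiff ℝ 7 G := by
    apply hF.sub
    exact ((contDiff_const.mul (contDiff_id.pow 0)).add
      (contDiff_const.mul (contDiff_id.pow 2))).add (contDiff_const.mul (contDiff_id.pow 4))
  have hGd : ∀ k : ℕ, k ≤ 7 → ∀ x : ℝ, iteratedDeriv k G x
      = iteratedDeriv k F x - (F 0 * ((Nat.descFactorial 0 k : ℝ) * x ^ (0 - k))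
          + (1 / 2 * iteratedDeriv 2 F 0) * ((Nat.descFactorial 2 k : ℝ) * x ^ (2 - k))
          + (1 / 24 * iteratedDeriv 4 F 0) * ((Nat.descFactorial 4 k : ℝ) * x ^ (4 - k))) := by
    intro k hk x
    have := itd_G hF (F 0) (1 / 2 * iteratedDeriv 2 F 0) (1 / 24 * iteratedDeriv 4 F 0) hk x
    rw [hGdef]
    convert this using 3 <;> ring
  have h0 : ∀ k, k < 5 → iteratedDeriv k G 0 = 0 := by
    intro k hk
    interval_cases k
    · rw [hGd 0 (by norm_num)]
      simp [Nat.descFactorial]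
    · rw [hGd 1 (by norm_num)]
      simp [iteratedDeriv_one, hF1, Nat.descFactorial]
    · rw [hGd 2 (by norm_num)]
      norm_num [Nat.descFactorial]
      ring
    · rw [hGd 3 (by norm_num)]
      simp [hF3, Nat.descFactorial]
    · rw [hGd 4 (by norm_num)]
      norm_num [Nat.descFactorial]
      ring
  have hb : ∀ k, 5 ≤ k → k ≤ 7 → ∀ x : ℝ, |iteratedDeriv k G x| ≤ L * Real.exp (m * |x|) := by
    intro k hk5 hk7 x
    have d0 : (Nat.descFactorial 0 k : ℝ) = 0 := by
      exact_mod_cast Nat.descFactorial_eq_zero_iff_lt.2 (by omega)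
    have d2 : (Nat.descFactorial 2 k : ℝ) = 0 := by
      exact_mod_cast Nat.descFactorial_eq_zero_iff_lt.2 (by omega)
    have d4 : (Nat.descFactorial 4 k : ℝ) = 0 := by
      exact_mod_cast Nat.descFactorial_eq_zero_iff_lt.2 (by omega)
    calc |iteratedDeriv k G x| = |iteratedDeriv k F x| := by
          rw [hGd k hk7, d0, d2, d4]; norm_num
      _ ≤ L * Real.exp (m * |x|) := hFb k hk7 x
  have hfeq : (fun v : ℝ => ε ^ (-(4 : ℝ) / 3) * (F (ε ^ ((1 : ℝ) / 3) * v) - F 0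
          - 1 / 2 * iteratedDeriv 2 F 0 * ε ^ ((2 : ℝ) / 3) * v ^ 2)
        - 1 / 24 * iteratedDeriv 4 F 0 * v ^ 4)
      = fun v : ℝ => ε ^ (-(4 : ℝ) / 3) * G (ε ^ ((1 : ℝ) / 3) * v) := by
    funext v
    have key2 : (ε ^ ((1:ℝ)/3)) ^ (2:ℕ) = ε ^ ((2:ℝ)/3) := by
      have := apow_gen hε 2 0 ((2:ℝ)/3) (by norm_num)
      rwa [Real.rpow_zero, mul_one] at this
    have key4 : (ε ^ ((1:ℝ)/3)) ^ (4:ℕ) * ε ^ (-(4:ℝ)/3) = 1 := by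
      have := apow_gen hε 4 (-(4:ℝ)/3) 0 (by norm_num)
      rwa [Real.rpow_zero] at this
    rw [hGdef]
    linear_combination ((1 / 2) * iteratedDeriv 2 F 0 * ε ^ (-(4:ℝ)/3) * v ^ 2) * key2
      + (1 / 24 * iteratedDeriv 4 F 0 * v ^ 4) * key4
  have hitd : iteratedDeriv ℓ (fun v : ℝ => ε ^ (-(4 : ℝ) / 3) * G (ε ^ ((1 : ℝ) / 3) * v)) u
      = ε ^ (-(4 : ℝ) / 3) * ((ε ^ ((1:ℝ)/3)) ^ ℓ
          * iteratedDeriv ℓ G (ε ^ ((1 : ℝ) / 3) * u)) := by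
    have hGa : ContDiff ℝ ℓ (fun v : ℝ => G (ε ^ ((1 : ℝ) / 3) * v)) :=
      (hG.of_le (by exact_mod_cast hℓ)).comp (contDiff_const.mul contDiff_id)
    rw [itd_cmul hGa (ε ^ (-(4 : ℝ) / 3)) u,
      iteratedDeriv_comp_const_mul (hG.of_le (by exact_mod_cast hℓ)) (ε ^ ((1 : ℝ) / 3))]
  rw [hfeq, hitd]
  have hsb := scaled_bound hm hL0 hG (n := 5) (by norm_num) h0 hb hε ha12
    (r := -(4:ℝ)/3) (by norm_num) hℓ (e := 0) (by omega) u
  simp only [pow_zero, one_mul] at hsb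
  calc Real.exp (-m * |u|) * |ε ^ (-(4 : ℝ) / 3) * ((ε ^ ((1:ℝ)/3)) ^ ℓ
          * iteratedDeriv ℓ G (ε ^ ((1 : ℝ) / 3) * u))|
      ≤ ε ^ ((1:ℝ)/3) * (L * B) := hsb
    _ ≤ ε ^ ((1:ℝ)/3) * M := by
        apply mul_le_mul_of_nonneg_left _ (Real.rpow_pos_of_pos hε _).le
        rw [hM]; nlinarith [mul_nonneg hL0 hBpos.le]
    _ ≤ δ := haM


end Stmt13Helpers



/-- Convergence of the rescaled nonlinearities `F_{i,ε}` to their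
limiting polynomial nonlinearities in the weighted norm
`‖F‖_{m,7} = sup_{0≤ℓ≤7} sup_x e^{−m|x|} |F^{(ℓ)}(x)|` (convergence of the norm to `0` is
expressed as: for every `δ > 0` there is `ε₀ > 0` below which all the weighted values are
at most `δ`). -/
theorem stmt_13 (m : ℝ) (hm : 0 < m) :
    -- (i)
    (∀ F : ℝ → ℝ, ContDiff ℝ 7 F →
      (∃ L : ℝ, ∀ ℓ : ℕ, ℓ ≤ 7 → ∀ x : ℝ,
        Real.exp (-m * |x|) * |iteratedDeriv ℓ F x| ≤ L) →
      F 0 = 0 → deriv F 0 = 0 →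
      ∀ δ : ℝ, 0 < δ → ∃ ε₀ : ℝ, 0 < ε₀ ∧
        ∀ ε : ℝ, 0 < ε → ε ≤ ε₀ → ∀ ℓ : ℕ, ℓ ≤ 7 → ∀ u : ℝ,
          Real.exp (-m * |u|) *
            |iteratedDeriv ℓ (fun v : ℝ =>
                ε ^ (-(2 : ℝ) / 3) * F (ε ^ ((1 : ℝ) / 3) * v)
                  - 1 / 2 * iteratedDeriv 2 F 0 * v ^ 2) u| ≤ δ) ∧
    -- (ii)
    (∀ F : ℝ → ℝ, ContDiff ℝ 7 F →
      (∃ L : ℝ, ∀ ℓ : ℕ, ℓ ≤ 7 → ∀ x : ℝ,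
        Real.exp (-m * |x|) * |iteratedDeriv ℓ F x| ≤ L) →
      deriv F 0 = 0 →
      ∀ δ : ℝ, 0 < δ → ∃ ε₀ : ℝ, 0 < ε₀ ∧
        ∀ ε : ℝ, 0 < ε → ε ≤ ε₀ → ∀ ℓ : ℕ, ℓ ≤ 7 → ∀ u : ℝ,
          Real.exp (-m * |u|) *
            |iteratedDeriv ℓ (fun v : ℝ =>
                ε ^ (-(2 : ℝ) / 3) * (F (ε ^ ((1 : ℝ) / 3) * v) - F 0) * v
                  - 1 / 2 * iteratedDeriv 2 F 0 * v ^ 3) u| ≤ δ) ∧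
    -- (iii)
    (∀ F : ℝ → ℝ, ContDiff ℝ 7 F →
      (∃ L : ℝ, ∀ ℓ : ℕ, ℓ ≤ 7 → ∀ x : ℝ,
        Real.exp (-m * |x|) * |iteratedDeriv ℓ F x| ≤ L) →
      deriv F 0 = 0 → iteratedDeriv 3 F 0 = 0 →
      ∀ δ : ℝ, 0 < δ → ∃ ε₀ : ℝ, 0 < ε₀ ∧
        ∀ ε : ℝ, 0 < ε → ε ≤ ε₀ → ∀ ℓ : ℕ, ℓ ≤ 7 → ∀ u : ℝ,
          Real.exp (-m * |u|) *
            |iteratedDeriv ℓ (fun v : ℝ =>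
                ε ^ (-(4 : ℝ) / 3) * (F (ε ^ ((1 : ℝ) / 3) * v) - F 0
                    - 1 / 2 * iteratedDeriv 2 F 0 * ε ^ ((2 : ℝ) / 3) * v ^ 2)
                  - 1 / 24 * iteratedDeriv 4 F 0 * v ^ 4) u| ≤ δ) := by
  exact ⟨part_one hm, part_two hm, part_three hm⟩
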